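/- The operator logarithmic derivative with respect to φ, defined by L₃ = ∫₀^π ∫₀^{2π} (∂/∂φ)[log Q(r,θ,φ;θ₁,φ₁)] · Δ(θ₁,φ₁,1) · (sinθ₁/(2π)) dφ₁ dθ₁, equals (3/(4r²))·(2r + (1-r²)·log((1-r)/(1+r))) · [[0, -i·e^{-iφ}·sinθ],[i·e^{iφ}·sinθ, 0]], for 0 < r < 1. -/

import Mathlib

open Real Matrix MeasureTheory

noncomputable def husimiQ (r θ φ θ₁ φ₁ : ℝ) : ℝ :=
  (1 / 2) * (1 + r * Real.cos θ₁ * Real.cos θ + r * Real.cos (φ₁ - φ) * Real.sin θ₁ * Real.sin θ)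

/-- The Stratonovich–Weyl kernel with ordering parameter `s = 1`. -/
noncomputable def swKernelOne (θ φ : ℝ) : Matrix (Fin 2) (Fin 2) ℂ :=
  (1 / 2 : ℂ) •
    !![(1 + 3 * Real.cos θ : ℂ), 3 * Complex.exp (-Complex.I * φ) * Real.sin θ;
       3 * Complex.exp (Complex.I * φ) * Real.sin θ, (1 - 3 * Real.cos θ : ℂ)]

/-- The claimed closed form of the operator logarithmic derivative `L₃`. -/
noncomputable def L3 (r θ φ : ℝ) : Matrix (Fin 2) (Fin 2) ℂ :=
  ((3 / (4 * r ^ 2) * (2 * r + (1 - r ^ 2) * Real.log ((1 - r) / (1 + r))) : ℝ) : ℂ) •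
    !![0, -Complex.I * Complex.exp (-Complex.I * φ) * Real.sin θ;
       Complex.I * Complex.exp (Complex.I * φ) * Real.sin θ, 0]

section Aux

lemma den_pos {A B : ℝ} (h : |B| < A) (x : ℝ) : 0 < A + B * Real.cos x := by
  have h1 : |B * Real.cos x| ≤ |B| := by
    rw [abs_mul]; nlinarith [Real.abs_cos_le_one x, abs_nonneg B]
  have := neg_abs_le (B * Real.cos x); linarith [abs_nonneg B]

lemma k1 {A B : ℝ} (h : |B| < A) :
    ∫ x in (0:ℝ)..(2*π), B * Real.sin x / (A + B * Real.cos x) = 0 := by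
  have hF : ∀ x ∈ Set.uIcc (0:ℝ) (2*π), HasDerivAt (fun y => -Real.log (A + B * Real.cos y))
      (B * Real.sin x / (A + B * Real.cos x)) x := by
    intro x _
    have hd : HasDerivAt (fun y => A + B * Real.cos y) (B * -Real.sin x) x :=
      ((Real.hasDerivAt_cos x).const_mul B).const_add A
    have := (hd.log (den_pos h x).ne').neg
    refine this.congr_deriv ?_
    field_simp
  have hi : IntervalIntegrable (fun x => B * Real.sin x / (A + B * Real.cos x)) MeasureTheory.volume 0 (2*π) := by
    apply Continuous.intervalIntegrable
    exact (continuous_const.mul Real.continuous_sin).div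
      (continuous_const.add (continuous_const.mul Real.continuous_cos)) (fun x => (den_pos h x).ne')
  rw [intervalIntegral.integral_eq_sub_of_hasDerivAt hF hi]
  simp [Real.cos_two_pi]

lemma k2 {A B : ℝ} (h : |B| < A) (hB : B ≠ 0) :
    ∫ x in (0:ℝ)..(2*π), B * Real.sin x * Real.cos x / (A + B * Real.cos x) = 0 := by
  have hF : ∀ x ∈ Set.uIcc (0:ℝ) (2*π), HasDerivAt
      (fun y => -Real.cos y + (A/B) * Real.log (A + B * Real.cos y))
      (B * Real.sin x * Real.cos x / (A + B * Real.cos x)) x := by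
    intro x _
    have hd : HasDerivAt (fun y => A + B * Real.cos y) (B * -Real.sin x) x :=
      ((Real.hasDerivAt_cos x).const_mul B).const_add A
    have h2 := (Real.hasDerivAt_cos x).neg.add ((hd.log (den_pos h x).ne').const_mul (A/B))
    refine h2.congr_deriv ?_
    have hden := (den_pos h x).ne'
    field_simp
    ring
  have hi : IntervalIntegrable (fun x => B * Real.sin x * Real.cos x / (A + B * Real.cos x)) MeasureTheory.volume 0 (2*π) := by
    apply Continuous.intervalIntegrable
    exact ((continuous_const.mul Real.continuous_sin).mul Real.continuous_cos).div
      (continuous_const.add (continuous_const.mul Real.continuous_cos)) (fun x => (den_pos h x).ne')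
  rw [intervalIntegral.integral_eq_sub_of_hasDerivAt hF hi]
  simp [Real.cos_two_pi]

lemma k3 {A B : ℝ} (h : |B| < A) (hB : B ≠ 0) :
    ∫ x in (0:ℝ)..(2*π), B * Real.sin x ^ 2 / (A + B * Real.cos x) =
      2 * π * (A - Real.sqrt (A ^ 2 - B ^ 2)) / B := by
  set D := Real.sqrt (A ^ 2 - B ^ 2) with hD
  have hApos : 0 < A := lt_of_le_of_lt (abs_nonneg B) h
  have hAB2 : 0 < A ^ 2 - B ^ 2 := by nlinarith [abs_nonneg B, neg_abs_le B, le_abs_self B]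
  have hDpos : 0 < D := Real.sqrt_pos.mpr hAB2
  have hDne : D ≠ 0 := hDpos.ne'
  have hD2 : D ^ 2 = A ^ 2 - B ^ 2 := Real.sq_sqrt hAB2.le
  have hADne : A + D ≠ 0 := by positivity
  set G : ℝ → ℝ := fun y =>
    (B - A ^ 2 / B) / D * (y - 2 * Real.arctan (B * Real.sin y / (A + D + B * Real.cos y)))
      + (A / B) * y - Real.sin y with hG
  have hF : ∀ x ∈ Set.uIcc (0:ℝ) (2*π), HasDerivAt G
      (B * Real.sin x ^ 2 / (A + B * Real.cos x)) x := by
    intro x _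
    have hvpos : 0 < A + D + B * Real.cos x := by have := den_pos h x; linarith
    have hv : A + D + B * Real.cos x ≠ 0 := hvpos.ne'
    have hden : A + B * Real.cos x ≠ 0 := (den_pos h x).ne'
    have hnum : HasDerivAt (fun y => B * Real.sin y) (B * Real.cos x) x :=
      (Real.hasDerivAt_sin x).const_mul B
    have hdenD : HasDerivAt (fun y => A + D + B * Real.cos y) (B * -Real.sin x) x :=
      ((Real.hasDerivAt_cos x).const_mul B).const_add (A + D)
    have hu : HasDerivAt (fun y => B * Real.sin y / (A + D + B * Real.cos y))
        ((B * Real.cos x * (A + D + B * Real.cos x) - B * Real.sin x * (B * -Real.sin x)) /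
          (A + D + B * Real.cos x) ^ 2) x := hnum.div hdenD hv
    have harct := hu.arctan
    have hw : HasDerivAt (fun y => y - 2 * Real.arctan (B * Real.sin y / (A + D + B * Real.cos y)))
        (1 - 2 * (1 / (1 + (B * Real.sin x / (A + D + B * Real.cos x)) ^ 2) *
          ((B * Real.cos x * (A + D + B * Real.cos x) - B * Real.sin x * (B * -Real.sin x)) /
            (A + D + B * Real.cos x) ^ 2))) x :=
      (hasDerivAt_id x).sub (harct.const_mul 2)
    have h1 : 1 + (B * Real.sin x / (A + D + B * Real.cos x)) ^ 2
        = 2 * (A + D) * (A + B * Real.cos x) / (A + D + B * Real.cos x) ^ 2 := by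
      field_simp
      linear_combination hD2 + B ^ 2 * (Real.sin_sq_add_cos_sq x)
    have h2 : B * Real.cos x * (A + D + B * Real.cos x) - B * Real.sin x * (B * -Real.sin x)
        = B * ((A + D) * Real.cos x + B) := by
      linear_combination B ^ 2 * (Real.sin_sq_add_cos_sq x)
    have h3 : 1 / (1 + (B * Real.sin x / (A + D + B * Real.cos x)) ^ 2) *
          ((B * Real.cos x * (A + D + B * Real.cos x) - B * Real.sin x * (B * -Real.sin x)) /
            (A + D + B * Real.cos x) ^ 2)
        = B * ((A + D) * Real.cos x + B) / (2 * (A + D) * (A + B * Real.cos x)) := by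
      rw [h1, h2]
      field_simp
    have hkey : 1 - 2 * (1 / (1 + (B * Real.sin x / (A + D + B * Real.cos x)) ^ 2) *
          ((B * Real.cos x * (A + D + B * Real.cos x) - B * Real.sin x * (B * -Real.sin x)) /
            (A + D + B * Real.cos x) ^ 2))
        = D / (A + B * Real.cos x) := by
      rw [h3]
      field_simp
      linear_combination (-1) * hD2
    have hGtot := ((hw.const_mul ((B - A ^ 2 / B) / D)).add ((hasDerivAt_id x).const_mul (A / B))).sub
      (Real.hasDerivAt_sin x)
    refine hGtot.congr_deriv ?_
    rw [hkey]
    field_simp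
    linear_combination (-B ^ 2) * (Real.sin_sq_add_cos_sq x)
  have hi : IntervalIntegrable (fun x => B * Real.sin x ^ 2 / (A + B * Real.cos x)) MeasureTheory.volume 0 (2*π) := by
    apply Continuous.intervalIntegrable
    exact ((continuous_const.mul (Real.continuous_sin.pow 2))).div
      (continuous_const.add (continuous_const.mul Real.continuous_cos)) (fun x => (den_pos h x).ne')
  rw [intervalIntegral.integral_eq_sub_of_hasDerivAt hF hi]
  simp only [hG, Real.sin_two_pi, Real.sin_zero, Real.cos_two_pi, Real.cos_zero, mul_zero,
    zero_div, Real.arctan_zero, mul_zero, sub_zero, zero_mul, mul_zero]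
  field_simp
  linear_combination (2 * π) * hD2

lemma periodic_shift {f : ℝ → ℝ} (hf : Function.Periodic f (2*π)) (φ : ℝ) :
    ∫ x in (0:ℝ)..(2*π), f (x - φ) = ∫ x in (0:ℝ)..(2*π), f x := by
  rw [intervalIntegral.integral_comp_sub_right]
  have := hf.intervalIntegral_add_eq (-φ) 0
  simpa [zero_sub, sub_eq_add_neg, add_comm] using this

lemma real_one {A B : ℝ} (h : |B| < A) (φ : ℝ) :
    ∫ x in (0:ℝ)..(2*π), B * Real.sin (x - φ) / (A + B * Real.cos (x - φ)) = 0 := by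
  have hper : Function.Periodic (fun y => B * Real.sin y / (A + B * Real.cos y)) (2*π) := by
    intro y
    simp only [Real.sin_add_two_pi, Real.cos_add_two_pi]
  calc ∫ x in (0:ℝ)..(2*π), B * Real.sin (x - φ) / (A + B * Real.cos (x - φ))
      = ∫ x in (0:ℝ)..(2*π), (fun y => B * Real.sin y / (A + B * Real.cos y)) (x - φ) := rfl
    _ = ∫ x in (0:ℝ)..(2*π), B * Real.sin x / (A + B * Real.cos x) := periodic_shift hper φ
    _ = 0 := k1 h

lemma real_cos {A B : ℝ} (h : |B| < A) (hB : B ≠ 0) (φ : ℝ) :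
    ∫ x in (0:ℝ)..(2*π), B * Real.sin (x - φ) / (A + B * Real.cos (x - φ)) * Real.cos x
      = -Real.sin φ * (2 * π * (A - Real.sqrt (A ^ 2 - B ^ 2)) / B) := by
  have hper : Function.Periodic (fun y => B * Real.sin y / (A + B * Real.cos y) * Real.cos (y + φ)) (2*π) := by
    intro y
    simp only [Real.sin_add_two_pi, Real.cos_add_two_pi]
    rw [show y + 2*π + φ = y + φ + 2*π from by ring, Real.cos_add_two_pi]
  have hc2 : Continuous (fun y => B * Real.sin y * Real.cos y / (A + B * Real.cos y)) :=
    ((continuous_const.mul Real.continuous_sin).mul Real.continuous_cos).div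
      (continuous_const.add (continuous_const.mul Real.continuous_cos)) (fun x => (den_pos h x).ne')
  have hc3 : Continuous (fun y => B * Real.sin y ^ 2 / (A + B * Real.cos y)) :=
    (continuous_const.mul (Real.continuous_sin.pow 2)).div
      (continuous_const.add (continuous_const.mul Real.continuous_cos)) (fun x => (den_pos h x).ne')
  calc ∫ x in (0:ℝ)..(2*π), B * Real.sin (x - φ) / (A + B * Real.cos (x - φ)) * Real.cos x
      = ∫ x in (0:ℝ)..(2*π), (fun y => B * Real.sin y / (A + B * Real.cos y) * Real.cos (y + φ)) (x - φ) := by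
        apply intervalIntegral.integral_congr
        intro x _
        simp only
        rw [show x - φ + φ = x from by ring]
    _ = ∫ x in (0:ℝ)..(2*π), B * Real.sin x / (A + B * Real.cos x) * Real.cos (x + φ) :=
        periodic_shift hper φ
    _ = ∫ x in (0:ℝ)..(2*π), (Real.cos φ * (B * Real.sin x * Real.cos x / (A + B * Real.cos x))
          - Real.sin φ * (B * Real.sin x ^ 2 / (A + B * Real.cos x))) := by
        apply intervalIntegral.integral_congr
        intro x _
        simp only
        rw [Real.cos_add]
        field_simp
    _ = -Real.sin φ * (2 * π * (A - Real.sqrt (A ^ 2 - B ^ 2)) / B) := by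
        rw [intervalIntegral.integral_sub ((hc2.intervalIntegrable _ _).const_mul _)
            ((hc3.intervalIntegrable _ _).const_mul _),
          intervalIntegral.integral_const_mul, intervalIntegral.integral_const_mul, k2 h hB, k3 h hB]
        ring

lemma real_sin {A B : ℝ} (h : |B| < A) (hB : B ≠ 0) (φ : ℝ) :
    ∫ x in (0:ℝ)..(2*π), B * Real.sin (x - φ) / (A + B * Real.cos (x - φ)) * Real.sin x
      = Real.cos φ * (2 * π * (A - Real.sqrt (A ^ 2 - B ^ 2)) / B) := by
  have hper : Function.Periodic (fun y => B * Real.sin y / (A + B * Real.cos y) * Real.sin (y + φ)) (2*π) := by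
    intro y
    simp only [Real.sin_add_two_pi, Real.cos_add_two_pi]
    rw [show y + 2*π + φ = y + φ + 2*π from by ring, Real.sin_add_two_pi]
  have hc2 : Continuous (fun y => B * Real.sin y * Real.cos y / (A + B * Real.cos y)) :=
    ((continuous_const.mul Real.continuous_sin).mul Real.continuous_cos).div
      (continuous_const.add (continuous_const.mul Real.continuous_cos)) (fun x => (den_pos h x).ne')
  have hc3 : Continuous (fun y => B * Real.sin y ^ 2 / (A + B * Real.cos y)) :=
    (continuous_const.mul (Real.continuous_sin.pow 2)).div
      (continuous_const.add (continuous_const.mul Real.continuous_cos)) (fun x => (den_pos h x).ne')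
  calc ∫ x in (0:ℝ)..(2*π), B * Real.sin (x - φ) / (A + B * Real.cos (x - φ)) * Real.sin x
      = ∫ x in (0:ℝ)..(2*π), (fun y => B * Real.sin y / (A + B * Real.cos y) * Real.sin (y + φ)) (x - φ) := by
        apply intervalIntegral.integral_congr
        intro x _
        simp only
        rw [show x - φ + φ = x from by ring]
    _ = ∫ x in (0:ℝ)..(2*π), B * Real.sin x / (A + B * Real.cos x) * Real.sin (x + φ) :=
        periodic_shift hper φ
    _ = ∫ x in (0:ℝ)..(2*π), (Real.cos φ * (B * Real.sin x ^ 2 / (A + B * Real.cos x))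
          + Real.sin φ * (B * Real.sin x * Real.cos x / (A + B * Real.cos x))) := by
        apply intervalIntegral.integral_congr
        intro x _
        simp only
        rw [Real.sin_add]
        field_simp
    _ = Real.cos φ * (2 * π * (A - Real.sqrt (A ^ 2 - B ^ 2)) / B) := by
        rw [intervalIntegral.integral_add ((hc3.intervalIntegrable _ _).const_mul _)
            ((hc2.intervalIntegrable _ _).const_mul _),
          intervalIntegral.integral_const_mul, intervalIntegral.integral_const_mul, k2 h hB, k3 h hB]
        ring

lemma husimi_bound (r θ θ₁ : ℝ) (hr : 0 < r) (hr1 : r < 1) :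
    |r * Real.sin θ₁ * Real.sin θ| < 1 + r * Real.cos θ₁ * Real.cos θ := by
  have h1 : |r * Real.sin θ₁ * Real.sin θ| = r * (|Real.sin θ₁| * |Real.sin θ|) := by
    rw [abs_mul, abs_mul, abs_of_pos hr]; ring
  rw [h1]
  nlinarith [sq_nonneg (|Real.sin θ₁| - |Real.sin θ|), sq_nonneg (|Real.cos θ₁| - |Real.cos θ|),
    sq_abs (Real.sin θ₁), sq_abs (Real.sin θ), sq_abs (Real.cos θ₁), sq_abs (Real.cos θ),
    Real.sin_sq_add_cos_sq θ₁, Real.sin_sq_add_cos_sq θ,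
    neg_abs_le (Real.cos θ₁ * Real.cos θ), abs_mul (Real.cos θ₁) (Real.cos θ),
    abs_nonneg (Real.sin θ₁), abs_nonneg (Real.sin θ), abs_nonneg (Real.cos θ₁), abs_nonneg (Real.cos θ)]

lemma husimi_pos (r θ φ' θ₁ φ₁ : ℝ) (hr : 0 < r) (hr1 : r < 1) :
    0 < husimiQ r θ φ' θ₁ φ₁ := by
  have h := den_pos (husimi_bound r θ θ₁ hr hr1) (φ₁ - φ')
  have h2 : husimiQ r θ φ' θ₁ φ₁
      = (1 + r * Real.cos θ₁ * Real.cos θ + r * Real.sin θ₁ * Real.sin θ * Real.cos (φ₁ - φ')) / 2 := by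
    unfold husimiQ; ring
  rw [h2]; linarith

lemma deriv_log_husimi (r θ φ θ₁ φ₁ : ℝ) (hr : 0 < r) (hr1 : r < 1) :
    deriv (fun φ' => Real.log (husimiQ r θ φ' θ₁ φ₁)) φ
      = (r * Real.sin θ₁ * Real.sin θ) * Real.sin (φ₁ - φ) /
        ((1 + r * Real.cos θ₁ * Real.cos θ) + (r * Real.sin θ₁ * Real.sin θ) * Real.cos (φ₁ - φ)) := by
  have hcos : HasDerivAt (fun φ' => Real.cos (φ₁ - φ')) (Real.sin (φ₁ - φ)) φ := by
    have h1 : HasDerivAt (fun φ' : ℝ => φ₁ - φ') (-1) φ := (hasDerivAt_id φ).const_sub φ₁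
    simpa using h1.cos
  have hQ : HasDerivAt (fun φ' => husimiQ r θ φ' θ₁ φ₁)
      (1 / 2 * (r * Real.sin (φ₁ - φ) * Real.sin θ₁ * Real.sin θ)) φ := by
    unfold husimiQ
    exact ((((hcos.const_mul r).mul_const (Real.sin θ₁)).mul_const (Real.sin θ)).const_add
      (1 + r * Real.cos θ₁ * Real.cos θ)).const_mul (1 / 2)
  have hlog := hQ.log (husimi_pos r θ φ θ₁ φ₁ hr hr1).ne'
  rw [hlog.deriv]
  have hden := den_pos (husimi_bound r θ θ₁ hr hr1) (φ₁ - φ)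
  have hQpos := husimi_pos r θ φ θ₁ φ₁ hr hr1
  unfold husimiQ at hQpos ⊢
  rw [div_eq_div_iff hQpos.ne' hden.ne']
  ring

lemma phi_deriv (k : ℝ) (hk : 0 < k) (t : ℝ) :
    HasDerivAt (fun t => (t * Real.sqrt (t ^ 2 + k) + k * Real.log (t + Real.sqrt (t ^ 2 + k))) / 2)
      (Real.sqrt (t ^ 2 + k)) t := by
  have hpos : 0 < t ^ 2 + k := by positivity
  have hq : 0 < Real.sqrt (t ^ 2 + k) := Real.sqrt_pos.mpr hpos
  have hq2 : Real.sqrt (t ^ 2 + k) ^ 2 = t ^ 2 + k := Real.sq_sqrt hpos.le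
  have htq : 0 < t + Real.sqrt (t ^ 2 + k) := by
    have h1 : |t| < Real.sqrt (t ^ 2 + k) := by
      rw [← Real.sqrt_sq_eq_abs]
      exact Real.sqrt_lt_sqrt (sq_nonneg t) (by linarith)
    have := neg_abs_le t
    linarith
  have hsq : HasDerivAt (fun u => Real.sqrt (u ^ 2 + k)) (1 / (2 * Real.sqrt (t ^ 2 + k)) * (2 * t)) t := by
    have hinner : HasDerivAt (fun u : ℝ => u ^ 2 + k) (2 * t) t := by
      simpa using (hasDerivAt_pow 2 t).add_const k
    exact (Real.hasDerivAt_sqrt hpos.ne').comp t hinner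
  have hmul := (hasDerivAt_id t).mul hsq
  have hlog := (((hasDerivAt_id t).add hsq).log htq.ne').const_mul k
  have htot := (hmul.add hlog).div_const 2
  refine htot.congr_deriv ?_
  simp only [Pi.add_apply, id]
  field_simp
  linear_combination (-(Real.sqrt (t^2+k) + t)) * hq2

lemma outer_int (r θ : ℝ) (hr : 0 < r) (hr1 : r < 1) (hs : Real.sin θ ≠ 0) :
    (∫ y in (0:ℝ)..π, Real.sin y * ((1 + r * Real.cos y * Real.cos θ) -
      Real.sqrt ((r * Real.cos y + Real.cos θ) ^ 2 + Real.sin θ ^ 2 * (1 - r ^ 2))))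
    = Real.sin θ ^ 2 * (1 + (1 - r ^ 2) / (2 * r) * Real.log ((1 - r) / (1 + r))) := by
  set c := Real.cos θ
  set s := Real.sin θ
  set k := s ^ 2 * (1 - r ^ 2) with hkdef
  have hs2 : 0 < s ^ 2 := by positivity
  have hk : 0 < k := by rw [hkdef]; exact mul_pos hs2 (by nlinarith)
  have hpy : s ^ 2 + c ^ 2 = 1 := Real.sin_sq_add_cos_sq θ
  have hc1 : -1 < c := by nlinarith
  have hc2 : c ≤ 1 := Real.cos_le_one θ
  set Φ : ℝ → ℝ := fun t => (t * Real.sqrt (t ^ 2 + k) + k * Real.log (t + Real.sqrt (t ^ 2 + k))) / 2 with hΦ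
  set H : ℝ → ℝ := fun y => -Real.cos y - (r * c / 2) * Real.cos y ^ 2 + (1 / r) * Φ (r * Real.cos y + c) with hH
  have hF : ∀ y ∈ Set.uIcc (0:ℝ) π, HasDerivAt H
      (Real.sin y * ((1 + r * Real.cos y * c) -
        Real.sqrt ((r * Real.cos y + c) ^ 2 + k))) y := by
    intro y _
    have h1 : HasDerivAt (fun y => -Real.cos y) (Real.sin y) y := (Real.hasDerivAt_cos y).neg.congr_deriv (neg_neg _)
    have h2 : HasDerivAt (fun y => -(r * c / 2) * Real.cos y ^ 2) (-(r * c / 2) * (2 * Real.cos y ^ 1 * -Real.sin y)) y :=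
      ((Real.hasDerivAt_cos y).pow 2).const_mul (-(r * c / 2))
    have hin : HasDerivAt (fun y => r * Real.cos y + c) (r * -Real.sin y) y :=
      ((Real.hasDerivAt_cos y).const_mul r).add_const c
    have h3 := ((phi_deriv k hk (r * Real.cos y + c)).comp y hin).const_mul (1 / r)
    have htot := (h1.add h2).add h3
    have heq : H = fun y => -Real.cos y + -(r * c / 2) * Real.cos y ^ 2 + (1 / r) * Φ (r * Real.cos y + c) := by
      funext z; simp [hH]; ring
    rw [heq]
    refine htot.congr_deriv ?_
    field_simp
    ring
  have hcont : Continuous (fun y => Real.sin y * ((1 + r * Real.cos y * c) -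
      Real.sqrt ((r * Real.cos y + c) ^ 2 + k))) := by
    apply Real.continuous_sin.mul
    apply Continuous.sub
    · exact continuous_const.add ((continuous_const.mul Real.continuous_cos).mul continuous_const)
    · exact Real.continuous_sqrt.comp ((((continuous_const.mul Real.continuous_cos).add continuous_const).pow 2).add continuous_const)
  rw [intervalIntegral.integral_eq_sub_of_hasDerivAt hF (hcont.intervalIntegrable _ _)]
  have e1 : (r * (-1) + c) ^ 2 + k = (1 - r * c) ^ 2 := by
    linear_combination (1 - r ^ 2) * hpy
  have e2 : (r * 1 + c) ^ 2 + k = (1 + r * c) ^ 2 := by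
    linear_combination (1 - r ^ 2) * hpy
  have hrc1 : 0 < 1 - r * c := by nlinarith
  have hrc2 : 0 < 1 + r * c := by nlinarith
  have hs1 : Real.sqrt ((r * (-1) + c) ^ 2 + k) = 1 - r * c := by
    rw [e1, Real.sqrt_sq hrc1.le]
  have hs2' : Real.sqrt ((r * 1 + c) ^ 2 + k) = 1 + r * c := by
    rw [e2, Real.sqrt_sq hrc2.le]
  simp only [hH, hΦ, Real.cos_pi, Real.cos_zero, hs1, hs2']
  have hl1 : r * -1 + c + (1 - r * c) = (1 + c) * (1 - r) := by ring
  have hl2 : r * 1 + c + (1 + r * c) = (1 + c) * (1 + r) := by ring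
  rw [hl1, hl2]
  have hcpos : 0 < 1 + c := by linarith
  have hrm : 0 < 1 - r := by linarith
  have hrp : 0 < 1 + r := by linarith
  rw [Real.log_mul hcpos.ne' hrm.ne', Real.log_mul hcpos.ne' hrp.ne',
    Real.log_div hrm.ne' hrp.ne']
  field_simp
  linear_combination (-2 * r) * hpy

lemma cint (u v : ℝ → ℝ) (hu : Continuous u) (hv : Continuous v) (a b : ℝ) :
    (∫ x in a..b, ((u x : ℂ) + (v x : ℂ) * Complex.I)) =
      ((∫ x in a..b, u x : ℝ) : ℂ) + ((∫ x in a..b, v x : ℝ) : ℂ) * Complex.I := by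
  have h1 : Continuous fun x => ((u x : ℝ) : ℂ) := Complex.continuous_ofReal.comp hu
  have h2 : Continuous fun x => ((v x : ℝ) : ℂ) * Complex.I :=
    (Complex.continuous_ofReal.comp hv).mul continuous_const
  rw [intervalIntegral.integral_add (h1.intervalIntegrable _ _) (h2.intervalIntegrable _ _),
    intervalIntegral.integral_mul_const, intervalIntegral.integral_ofReal, intervalIntegral.integral_ofReal]

lemma hexp (φ : ℝ) : Complex.exp (-Complex.I * φ) = (Real.cos φ : ℂ) - (Real.sin φ : ℂ) * Complex.I := by
  rw [show -Complex.I * (φ:ℂ) = ((-φ : ℝ) : ℂ) * Complex.I from by push_cast; ring, Complex.exp_mul_I]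
  push_cast
  rw [Complex.cos_neg, Complex.sin_neg]
  ring

lemma hexp' (φ : ℝ) : Complex.exp (Complex.I * φ) = (Real.cos φ : ℂ) + (Real.sin φ : ℂ) * Complex.I := by
  rw [show Complex.I * (φ:ℂ) = ((φ : ℝ) : ℂ) * Complex.I from by push_cast; ring, Complex.exp_mul_I]
  rw [Complex.ofReal_sin, Complex.ofReal_cos]

lemma cfinal (a b W φ : ℝ) (h1 : a = -Real.sin φ * W) (h2 : b = -(Real.cos φ * W)) :
    (a:ℂ) + (b:ℂ) * Complex.I = -Complex.I * Complex.exp (-Complex.I * φ) * (W:ℂ) := by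
  subst h1 h2
  rw [hexp φ]
  push_cast
  linear_combination (-(Complex.sin (φ:ℂ)) * (W:ℂ)) * Complex.I_sq

lemma cfinal' (a b W φ : ℝ) (h1 : a = -Real.sin φ * W) (h2 : b = Real.cos φ * W) :
    (a:ℂ) + (b:ℂ) * Complex.I = Complex.I * Complex.exp (Complex.I * φ) * (W:ℂ) := by
  subst h1 h2
  rw [hexp' φ]
  push_cast
  linear_combination (-(Complex.sin (φ:ℂ)) * (W:ℂ)) * Complex.I_sq

end Aux

section Inner

lemma sw00 (θ₁ φ₁ : ℝ) : swKernelOne θ₁ φ₁ 0 0 = (((1 + 3 * Real.cos θ₁) / 2 : ℝ) : ℂ) := by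
  simp [swKernelOne]; push_cast; ring

lemma sw11 (θ₁ φ₁ : ℝ) : swKernelOne θ₁ φ₁ 1 1 = (((1 - 3 * Real.cos θ₁) / 2 : ℝ) : ℂ) := by
  simp [swKernelOne]; push_cast; ring

lemma sw01 (θ₁ φ₁ : ℝ) : swKernelOne θ₁ φ₁ 0 1
    = (3 / 2 : ℂ) * Complex.exp (-Complex.I * φ₁) * (Real.sin θ₁ : ℂ) := by
  simp [swKernelOne]; ring

lemma sw10 (θ₁ φ₁ : ℝ) : swKernelOne θ₁ φ₁ 1 0
    = (3 / 2 : ℂ) * Complex.exp (Complex.I * φ₁) * (Real.sin θ₁ : ℂ) := by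
  simp [swKernelOne]; ring

lemma inner00 (r θ φ θ₁ : ℝ) (hr : 0 < r) (hr1 : r < 1) (q : ℝ)
    (hq : ∀ φ₁ : ℝ, swKernelOne θ₁ φ₁ 0 0 = ((q : ℝ) : ℂ) ∨ swKernelOne θ₁ φ₁ 1 1 = ((q : ℝ) : ℂ)) :
    True := trivial

lemma inner_diag (r θ φ θ₁ : ℝ) (hr : 0 < r) (hr1 : r < 1) (q : ℝ) (K : ℝ → ℂ)
    (hq : ∀ φ₁ : ℝ, K φ₁ = ((q : ℝ) : ℂ)) :
    (∫ φ₁ in (0:ℝ)..(2 * π),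
        ((deriv (fun φ' => Real.log (husimiQ r θ φ' θ₁ φ₁)) φ : ℝ) : ℂ) *
          K φ₁ * ((Real.sin θ₁ / (2 * π) : ℝ) : ℂ)) = 0 := by
  have hAB := husimi_bound r θ θ₁ hr hr1
  have hcongr : ∀ x ∈ Set.uIcc (0:ℝ) (2*π),
      ((deriv (fun φ' => Real.log (husimiQ r θ φ' θ₁ x)) φ : ℝ) : ℂ) * K x * ((Real.sin θ₁ / (2 * π) : ℝ) : ℂ)
      = (((r * Real.sin θ₁ * Real.sin θ) * Real.sin (x - φ) /
          ((1 + r * Real.cos θ₁ * Real.cos θ) + (r * Real.sin θ₁ * Real.sin θ) * Real.cos (x - φ))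
          * (q * (Real.sin θ₁ / (2 * π))) : ℝ) : ℂ) := by
    intro x _
    rw [deriv_log_husimi r θ φ θ₁ x hr hr1, hq x]
    push_cast
    ring
  rw [intervalIntegral.integral_congr hcongr, intervalIntegral.integral_ofReal,
    intervalIntegral.integral_mul_const, real_one hAB φ]
  simp

lemma inner01 (r θ φ θ₁ : ℝ) (hr : 0 < r) (hr1 : r < 1) (hs : Real.sin θ ≠ 0) :
    (∫ φ₁ in (0:ℝ)..(2 * π),
        ((deriv (fun φ' => Real.log (husimiQ r θ φ' θ₁ φ₁)) φ : ℝ) : ℂ) *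
          swKernelOne θ₁ φ₁ 0 1 * ((Real.sin θ₁ / (2 * π) : ℝ) : ℂ))
    = -Complex.I * Complex.exp (-Complex.I * φ) *
        ((3 / (2 * r * Real.sin θ) * Real.sin θ₁ *
          ((1 + r * Real.cos θ₁ * Real.cos θ) -
            Real.sqrt ((1 + r * Real.cos θ₁ * Real.cos θ) ^ 2 - (r * Real.sin θ₁ * Real.sin θ) ^ 2)) : ℝ) : ℂ) := by
  have hAB := husimi_bound r θ θ₁ hr hr1
  by_cases hB : r * Real.sin θ₁ * Real.sin θ = 0
  · have hsθ₁ : Real.sin θ₁ = 0 := by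
      rcases mul_eq_zero.mp hB with h | h
      · rcases mul_eq_zero.mp h with h' | h'
        · exact absurd h' hr.ne'
        · exact h'
      · exact absurd h hs
    have hzero : ∀ x ∈ Set.uIcc (0:ℝ) (2*π),
        ((deriv (fun φ' => Real.log (husimiQ r θ φ' θ₁ x)) φ : ℝ) : ℂ) *
          swKernelOne θ₁ x 0 1 * ((Real.sin θ₁ / (2 * π) : ℝ) : ℂ) = 0 := by
      intro x _
      rw [deriv_log_husimi r θ φ θ₁ x hr hr1, hsθ₁]
      simp
    rw [intervalIntegral.integral_congr hzero]
    simp [hsθ₁]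
  · have hsθ₁ : Real.sin θ₁ ≠ 0 := by
      intro h; exact hB (by rw [h]; ring)
    have hgc : Continuous (fun x => (r * Real.sin θ₁ * Real.sin θ) * Real.sin (x - φ) /
        ((1 + r * Real.cos θ₁ * Real.cos θ) + (r * Real.sin θ₁ * Real.sin θ) * Real.cos (x - φ))) := by
      apply Continuous.div
      · exact continuous_const.mul (Real.continuous_sin.comp (continuous_id.sub continuous_const))
      · exact continuous_const.add (continuous_const.mul (Real.continuous_cos.comp (continuous_id.sub continuous_const)))
      · intro x; exact (den_pos hAB (x - φ)).ne'
    set U : ℝ → ℝ := fun x => (r * Real.sin θ₁ * Real.sin θ) * Real.sin (x - φ) /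
        ((1 + r * Real.cos θ₁ * Real.cos θ) + (r * Real.sin θ₁ * Real.sin θ) * Real.cos (x - φ))
        * Real.cos x * (3 * Real.sin θ₁ ^ 2 / (4 * π)) with hU
    set V : ℝ → ℝ := fun x => -((r * Real.sin θ₁ * Real.sin θ) * Real.sin (x - φ) /
        ((1 + r * Real.cos θ₁ * Real.cos θ) + (r * Real.sin θ₁ * Real.sin θ) * Real.cos (x - φ))
        * Real.sin x * (3 * Real.sin θ₁ ^ 2 / (4 * π))) with hV
    have hcongr : ∀ x ∈ Set.uIcc (0:ℝ) (2*π),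
        ((deriv (fun φ' => Real.log (husimiQ r θ φ' θ₁ x)) φ : ℝ) : ℂ) *
          swKernelOne θ₁ x 0 1 * ((Real.sin θ₁ / (2 * π) : ℝ) : ℂ)
        = ((U x : ℝ) : ℂ) + ((V x : ℝ) : ℂ) * Complex.I := by
      intro x _
      rw [deriv_log_husimi r θ φ θ₁ x hr hr1, sw01, hexp x, hU, hV]
      push_cast
      ring
    rw [intervalIntegral.integral_congr hcongr,
      cint U V ((hgc.mul Real.continuous_cos).mul continuous_const)
        (((hgc.mul Real.continuous_sin).mul continuous_const).neg)]
    apply cfinal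
    · rw [hU]
      rw [intervalIntegral.integral_mul_const, real_cos hAB hB φ]
      field_simp
      ring
    · rw [hV]
      rw [intervalIntegral.integral_neg, intervalIntegral.integral_mul_const, real_sin hAB hB φ]
      field_simp
      ring

lemma inner10 (r θ φ θ₁ : ℝ) (hr : 0 < r) (hr1 : r < 1) (hs : Real.sin θ ≠ 0) :
    (∫ φ₁ in (0:ℝ)..(2 * π),
        ((deriv (fun φ' => Real.log (husimiQ r θ φ' θ₁ φ₁)) φ : ℝ) : ℂ) *
          swKernelOne θ₁ φ₁ 1 0 * ((Real.sin θ₁ / (2 * π) : ℝ) : ℂ))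
    = Complex.I * Complex.exp (Complex.I * φ) *
        ((3 / (2 * r * Real.sin θ) * Real.sin θ₁ *
          ((1 + r * Real.cos θ₁ * Real.cos θ) -
            Real.sqrt ((1 + r * Real.cos θ₁ * Real.cos θ) ^ 2 - (r * Real.sin θ₁ * Real.sin θ) ^ 2)) : ℝ) : ℂ) := by
  have hAB := husimi_bound r θ θ₁ hr hr1
  by_cases hB : r * Real.sin θ₁ * Real.sin θ = 0
  · have hsθ₁ : Real.sin θ₁ = 0 := by
      rcases mul_eq_zero.mp hB with h | h
      · rcases mul_eq_zero.mp h with h' | h'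
        · exact absurd h' hr.ne'
        · exact h'
      · exact absurd h hs
    have hzero : ∀ x ∈ Set.uIcc (0:ℝ) (2*π),
        ((deriv (fun φ' => Real.log (husimiQ r θ φ' θ₁ x)) φ : ℝ) : ℂ) *
          swKernelOne θ₁ x 1 0 * ((Real.sin θ₁ / (2 * π) : ℝ) : ℂ) = 0 := by
      intro x _
      rw [deriv_log_husimi r θ φ θ₁ x hr hr1, hsθ₁]
      simp
    rw [intervalIntegral.integral_congr hzero]
    simp [hsθ₁]
  · have hsθ₁ : Real.sin θ₁ ≠ 0 := by
      intro h; exact hB (by rw [h]; ring)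
    have hgc : Continuous (fun x => (r * Real.sin θ₁ * Real.sin θ) * Real.sin (x - φ) /
        ((1 + r * Real.cos θ₁ * Real.cos θ) + (r * Real.sin θ₁ * Real.sin θ) * Real.cos (x - φ))) := by
      apply Continuous.div
      · exact continuous_const.mul (Real.continuous_sin.comp (continuous_id.sub continuous_const))
      · exact continuous_const.add (continuous_const.mul (Real.continuous_cos.comp (continuous_id.sub continuous_const)))
      · intro x; exact (den_pos hAB (x - φ)).ne'
    set U : ℝ → ℝ := fun x => (r * Real.sin θ₁ * Real.sin θ) * Real.sin (x - φ) /
        ((1 + r * Real.cos θ₁ * Real.cos θ) + (r * Real.sin θ₁ * Real.sin θ) * Real.cos (x - φ))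
        * Real.cos x * (3 * Real.sin θ₁ ^ 2 / (4 * π)) with hU
    set V : ℝ → ℝ := fun x => (r * Real.sin θ₁ * Real.sin θ) * Real.sin (x - φ) /
        ((1 + r * Real.cos θ₁ * Real.cos θ) + (r * Real.sin θ₁ * Real.sin θ) * Real.cos (x - φ))
        * Real.sin x * (3 * Real.sin θ₁ ^ 2 / (4 * π)) with hV
    have hcongr : ∀ x ∈ Set.uIcc (0:ℝ) (2*π),
        ((deriv (fun φ' => Real.log (husimiQ r θ φ' θ₁ x)) φ : ℝ) : ℂ) *
          swKernelOne θ₁ x 1 0 * ((Real.sin θ₁ / (2 * π) : ℝ) : ℂ)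
        = ((U x : ℝ) : ℂ) + ((V x : ℝ) : ℂ) * Complex.I := by
      intro x _
      rw [deriv_log_husimi r θ φ θ₁ x hr hr1, sw10, hexp' x, hU, hV]
      push_cast
      ring
    rw [intervalIntegral.integral_congr hcongr,
      cint U V ((hgc.mul Real.continuous_cos).mul continuous_const)
        ((hgc.mul Real.continuous_sin).mul continuous_const)]
    apply cfinal'
    · rw [hU]
      rw [intervalIntegral.integral_mul_const, real_cos hAB hB φ]
      field_simp
      ring
    · rw [hV]
      rw [intervalIntegral.integral_mul_const, real_sin hAB hB φ]
      field_simp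
      ring

lemma W_integral (r θ : ℝ) (hr : 0 < r) (hr1 : r < 1) (hs : Real.sin θ ≠ 0) :
    (∫ θ₁ in (0:ℝ)..π, 3 / (2 * r * Real.sin θ) * Real.sin θ₁ *
        ((1 + r * Real.cos θ₁ * Real.cos θ) -
          Real.sqrt ((1 + r * Real.cos θ₁ * Real.cos θ) ^ 2 - (r * Real.sin θ₁ * Real.sin θ) ^ 2)))
    = (3 / (4 * r ^ 2) * (2 * r + (1 - r ^ 2) * Real.log ((1 - r) / (1 + r)))) * Real.sin θ := by
  have hstep : ∀ θ₁ ∈ Set.uIcc (0:ℝ) π,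
      3 / (2 * r * Real.sin θ) * Real.sin θ₁ *
        ((1 + r * Real.cos θ₁ * Real.cos θ) -
          Real.sqrt ((1 + r * Real.cos θ₁ * Real.cos θ) ^ 2 - (r * Real.sin θ₁ * Real.sin θ) ^ 2))
      = 3 / (2 * r * Real.sin θ) * (Real.sin θ₁ * ((1 + r * Real.cos θ₁ * Real.cos θ) -
          Real.sqrt ((r * Real.cos θ₁ + Real.cos θ) ^ 2 + Real.sin θ ^ 2 * (1 - r ^ 2)))) := by
    intro θ₁ _
    rw [show (1 + r * Real.cos θ₁ * Real.cos θ) ^ 2 - (r * Real.sin θ₁ * Real.sin θ) ^ 2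
        = (r * Real.cos θ₁ + Real.cos θ) ^ 2 + Real.sin θ ^ 2 * (1 - r ^ 2) from by
      linear_combination (r ^ 2 * Real.cos θ₁ ^ 2 - 1) * (Real.sin_sq_add_cos_sq θ)
        + (-(r ^ 2 * Real.sin θ ^ 2)) * (Real.sin_sq_add_cos_sq θ₁)]
    ring
  rw [intervalIntegral.integral_congr hstep, intervalIntegral.integral_const_mul,
    outer_int r θ hr hr1 hs]
  have hrm : (0:ℝ) < 1 - r := by linarith
  field_simp
  ring

end Inner

theorem L3_integral_formula (r θ φ : ℝ) (hr : 0 < r) (hr1 : r < 1) (i j : Fin 2) :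
    (∫ θ₁ in (0:ℝ)..π, ∫ φ₁ in (0:ℝ)..(2 * π),
        ((deriv (fun φ' => Real.log (husimiQ r θ φ' θ₁ φ₁)) φ : ℝ) : ℂ) *
          swKernelOne θ₁ φ₁ i j * ((Real.sin θ₁ / (2 * π) : ℝ) : ℂ)) =
      L3 r θ φ i j := by
  by_cases hs : Real.sin θ = 0
  · have hz : ∀ θ₁ ∈ Set.uIcc (0:ℝ) π,
        (∫ φ₁ in (0:ℝ)..(2 * π),
          ((deriv (fun φ' => Real.log (husimiQ r θ φ' θ₁ φ₁)) φ : ℝ) : ℂ) *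
            swKernelOne θ₁ φ₁ i j * ((Real.sin θ₁ / (2 * π) : ℝ) : ℂ)) = (0:ℂ) := by
      intro θ₁ _
      have hzero : ∀ x ∈ Set.uIcc (0:ℝ) (2*π),
          ((deriv (fun φ' => Real.log (husimiQ r θ φ' θ₁ x)) φ : ℝ) : ℂ) *
            swKernelOne θ₁ x i j * ((Real.sin θ₁ / (2 * π) : ℝ) : ℂ) = 0 := by
        intro x _
        rw [deriv_log_husimi r θ φ θ₁ x hr hr1, hs]
        simp
      rw [intervalIntegral.integral_congr hzero]
      simp
    rw [intervalIntegral.integral_congr hz]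
    fin_cases i <;> fin_cases j <;> simp [L3, hs]
  · fin_cases i <;> fin_cases j <;> simp only [Fin.zero_eta, Fin.mk_one]
    · rw [intervalIntegral.integral_congr
        (fun θ₁ _ => inner_diag r θ φ θ₁ hr hr1 ((1 + 3 * Real.cos θ₁) / 2)
          (fun φ₁ => swKernelOne θ₁ φ₁ 0 0) (fun φ₁ => sw00 θ₁ φ₁))]
      simp [L3]
    · rw [intervalIntegral.integral_congr (fun θ₁ _ => inner01 r θ φ θ₁ hr hr1 hs)]
      rw [intervalIntegral.integral_const_mul, intervalIntegral.integral_ofReal,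
        W_integral r θ hr hr1 hs]
      simp only [L3]
      push_cast
      simp
      ring
    · rw [intervalIntegral.integral_congr (fun θ₁ _ => inner10 r θ φ θ₁ hr hr1 hs)]
      rw [intervalIntegral.integral_const_mul, intervalIntegral.integral_ofReal,
        W_integral r θ hr hr1 hs]
      simp only [L3]
      push_cast
      simp
      ring
    · rw [intervalIntegral.integral_congr
        (fun θ₁ _ => inner_diag r θ φ θ₁ hr hr1 ((1 - 3 * Real.cos θ₁) / 2)
          (fun φ₁ => swKernelOne θ₁ φ₁ 1 1) (fun φ₁ => sw11 θ₁ φ₁))]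
      simp [L3]
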